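/- Suppose α = 0, q < 0, and |M| ≤ N. Then an admissible u is a global minimizer of ∫_Ω H_TF if and only if u₀(x) = 0 and u₁(x)² + u₋₁(x)² = n for almost every x ∈ Ω. -/

import Mathlib

open MeasureTheory

noncomputable section

abbrev E3 := EuclideanSpace ℝ (Fin 3)

/-- The sign `s`: `1` if `α ≥ 0`, `-1` otherwise. -/
def sgn' (α : ℝ) : ℝ := if 0 ≤ α then 1 else -1

/-- Thomas–Fermi energy density; coordinates: `v 0 = u₁`, `v 1 = u₀`, `v 2 = u₋₁`. -/
def HTF (α q : ℝ) (v : Fin 3 → ℝ) : ℝ :=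
  (1/2) * (v 0 ^ 2 + v 1 ^ 2 + v 2 ^ 2) ^ 2
    + (α/2) * (2 * v 1 ^ 2 * (v 0 - sgn' α * v 2) ^ 2 + (v 0 ^ 2 - v 2 ^ 2) ^ 2)
    + q * (v 0 ^ 2 + v 2 ^ 2)

/-- Admissibility: `u ∈ L⁴(Ω; ℝ³)`, nonnegative components a.e. on `Ω`,
with prescribed total mass `N` and total magnetization `M`. -/
structure Admissible (Ω : Set E3) (N M : ℝ) (u : E3 → Fin 3 → ℝ) : Prop where
  memL4 : MemLp u 4 (volume.restrict Ω)
  nonneg : ∀ᵐ x ∂(volume.restrict Ω), ∀ i, 0 ≤ u x i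
  mass : ∫ x in Ω, (u x 0 ^ 2 + u x 1 ^ 2 + u x 2 ^ 2) = N
  mag : ∫ x in Ω, (u x 0 ^ 2 - u x 2 ^ 2) = M

/-- `u` is a global minimizer of `∫_Ω H_TF` among admissible functions. -/
def IsMinimizer (Ω : Set E3) (α q N M : ℝ) (u : E3 → Fin 3 → ℝ) : Prop :=
  Admissible Ω N M u ∧
    ∀ v : E3 → Fin 3 → ℝ, Admissible Ω N M v →
      ∫ x in Ω, HTF α q (u x) ≤ ∫ x in Ω, HTF α q (v x)

open scoped ENNReal in
lemma integrable_of_bound {μ : Measure E3} [IsFiniteMeasure μ] {v : E3 → Fin 3 → ℝ}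
    (hv : MemLp v 4 μ) {f : E3 → ℝ} (hf : AEStronglyMeasurable f μ)
    (C : ℝ) (hC : ∀ x, |f x| ≤ C * (1 + ‖v x‖ ^ 4)) : Integrable f μ := by
  have h4 : Integrable (fun x => ‖v x‖ ^ 4) μ := by
    have h := hv.integrable_norm_rpow (by norm_num) (by norm_num)
    have : ((4 : ℝ≥0∞)).toReal = (4 : ℝ) := by norm_num
    rw [this] at h
    refine h.congr (Filter.Eventually.of_forall fun x => ?_)
    exact_mod_cast Real.rpow_natCast (‖v x‖) 4
  refine ((h4.const_mul C).add (integrable_const C)).mono' hf ?_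
  refine Filter.Eventually.of_forall fun x => ?_
  have := hC x
  simp only [Real.norm_eq_abs]
  calc |f x| ≤ C * (1 + ‖v x‖ ^ 4) := this
    _ = C * ‖v x‖ ^ 4 + C := by ring

lemma bound_rho_sq (a b c t n : ℝ) (ha : a^2 ≤ t^2) (hb : b^2 ≤ t^2) (hc : c^2 ≤ t^2) :
    (a^2 + b^2 + c^2 - n)^2 ≤ (18 + 2*n^2) * (1 + t^4) := by
  nlinarith [sq_nonneg a, sq_nonneg b, sq_nonneg c, sq_nonneg (t^2), sq_nonneg n,
    sq_nonneg (a^2 + b^2 + c^2 - 3*t^2), sq_nonneg (a^2 + b^2 + c^2 + n),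
    sq_nonneg (t^2 - 1), sq_nonneg (n*t^2)]

lemma bound_sq (b t : ℝ) (hb : b^2 ≤ t^2) : b^2 ≤ 1 * (1 + t^4) := by
  nlinarith [sq_nonneg (t^2 - 1)]

lemma bound_rho (a b c t : ℝ) (ha : a^2 ≤ t^2) (hb : b^2 ≤ t^2) (hc : c^2 ≤ t^2) :
    a^2 + b^2 + c^2 ≤ 3 * (1 + t^4) := by
  nlinarith [sq_nonneg (t^2 - 1)]

set_option maxHeartbeats 1000000 in
/-- `α = 0`, `q < 0`: minimizers are exactly the functions with `u₀ = 0` and `u₁² + u₋₁² = n` a.e. -/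
theorem alpha0_qneg
    (Ω : Set E3) (hΩm : MeasurableSet Ω) (hΩb : Bornology.IsBounded Ω)
    (hΩpos : 0 < volume Ω)
    (α q N M n m : ℝ)
    (hN : 0 < N)
    (hn : n = N / (volume Ω).toReal) (hm : m = M / (volume Ω).toReal)
    (hα : α = 0) (hq : q < 0) (hM : |M| ≤ N)
    (u : E3 → Fin 3 → ℝ) (hu : Admissible Ω N M u) :
    IsMinimizer Ω α q N M u ↔
      ∀ᵐ x ∂(volume.restrict Ω), u x 1 = 0 ∧ u x 0 ^ 2 + u x 2 ^ 2 = n := by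
  subst hα
  have hΩfin : volume Ω < ⊤ := hΩb.measure_lt_top
  have hfin : IsFiniteMeasure (volume.restrict Ω) :=
    ⟨by rw [Measure.restrict_apply_univ]; exact hΩfin⟩
  set T := (volume Ω).toReal with hTdef
  have hTpos : 0 < T := ENNReal.toReal_pos hΩpos.ne' hΩfin.ne
  have hnT : n * T = N := by rw [hn]; field_simp
  have hmT : m * T = M := by rw [hm]; field_simp
  have hnpos : 0 < n := by
    rw [hn]; exact div_pos hN hTpos
  have hmn : |m| ≤ n := by
    rw [hn, hm, abs_div, abs_of_pos hTpos]
    gcongr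
  -- pointwise identity for the energy density
  have hpt : ∀ w : Fin 3 → ℝ, HTF 0 q w =
      (1/2) * (w 0 ^ 2 + w 1 ^ 2 + w 2 ^ 2 - n)^2 + (-q) * (w 1)^2
        + ((n + q) * (w 0 ^ 2 + w 1 ^ 2 + w 2 ^ 2) - n^2/2) := by
    intro w; simp only [HTF]; ring
  -- key energy identity for admissible functions
  have key : ∀ v : E3 → Fin 3 → ℝ, Admissible Ω N M v →
      Integrable (fun x => (v x 0 ^ 2 + v x 1 ^ 2 + v x 2 ^ 2 - n)^2) (volume.restrict Ω) ∧
      Integrable (fun x => (v x 1)^2) (volume.restrict Ω) ∧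
      ∫ x in Ω, HTF 0 q (v x) = q*N + n*N/2
        + ((1/2) * (∫ x in Ω, (v x 0 ^ 2 + v x 1 ^ 2 + v x 2 ^ 2 - n)^2)
            + (-q) * (∫ x in Ω, (v x 1)^2)) := by
    intro v hv
    have hmeas := hv.memL4.aestronglyMeasurable
    have h0 : AEStronglyMeasurable (fun x => v x 0) (volume.restrict Ω) :=
      (continuous_apply (0 : Fin 3)).comp_aestronglyMeasurable hmeas
    have h1 : AEStronglyMeasurable (fun x => v x 1) (volume.restrict Ω) :=
      (continuous_apply (1 : Fin 3)).comp_aestronglyMeasurable hmeas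
    have h2 : AEStronglyMeasurable (fun x => v x 2) (volume.restrict Ω) :=
      (continuous_apply (2 : Fin 3)).comp_aestronglyMeasurable hmeas
    have hb : ∀ (x : E3) (i : Fin 3), (v x i)^2 ≤ ‖v x‖^2 := by
      intro x i
      rw [← sq_abs (v x i), ← Real.norm_eq_abs]
      exact pow_le_pow_left₀ (norm_nonneg _) (norm_le_pi_norm (v x) i) 2
    have hρsm : AEStronglyMeasurable
        (fun x => v x 0 ^ 2 + v x 1 ^ 2 + v x 2 ^ 2) (volume.restrict Ω) :=
      ((h0.pow 2).add (h1.pow 2)).add (h2.pow 2)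
    have I1 : Integrable (fun x => (v x 0 ^ 2 + v x 1 ^ 2 + v x 2 ^ 2 - n)^2)
        (volume.restrict Ω) := by
      refine integrable_of_bound hv.memL4 ((hρsm.sub aestronglyMeasurable_const).pow 2)
        (18 + 2*n^2) fun x => ?_
      rw [abs_of_nonneg (sq_nonneg _)]
      exact bound_rho_sq _ _ _ _ _ (hb x 0) (hb x 1) (hb x 2)
    have I2 : Integrable (fun x => (v x 1)^2) (volume.restrict Ω) := by
      refine integrable_of_bound hv.memL4 (h1.pow 2) 1 fun x => ?_
      rw [abs_of_nonneg (sq_nonneg _)]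
      exact bound_sq _ _ (hb x 1)
    have Iρ : Integrable (fun x => v x 0 ^ 2 + v x 1 ^ 2 + v x 2 ^ 2)
        (volume.restrict Ω) := by
      refine integrable_of_bound hv.memL4 hρsm 3 fun x => ?_
      rw [abs_of_nonneg (by positivity)]
      exact bound_rho _ _ _ _ (hb x 0) (hb x 1) (hb x 2)
    refine ⟨I1, I2, ?_⟩
    have hmass := hv.mass
    have Iab : Integrable (fun x : E3 => (1/2) * (v x 0 ^ 2 + v x 1 ^ 2 + v x 2 ^ 2 - n)^2
        + (-q) * (v x 1)^2) (volume.restrict Ω) :=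
      (I1.const_mul (1/2)).add (I2.const_mul (-q))
    have Ic : Integrable (fun x : E3 => (n + q) * (v x 0 ^ 2 + v x 1 ^ 2 + v x 2 ^ 2) - n^2/2)
        (volume.restrict Ω) := (Iρ.const_mul (n + q)).sub (integrable_const _)
    calc ∫ x in Ω, HTF 0 q (v x)
        = ∫ x in Ω, ((1/2) * (v x 0 ^ 2 + v x 1 ^ 2 + v x 2 ^ 2 - n)^2 + (-q) * (v x 1)^2
            + ((n + q) * (v x 0 ^ 2 + v x 1 ^ 2 + v x 2 ^ 2) - n^2/2)) := by
          simp_rw [hpt]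
      _ = ((1/2) * (∫ x in Ω, (v x 0 ^ 2 + v x 1 ^ 2 + v x 2 ^ 2 - n)^2))
            + ((-q) * (∫ x in Ω, (v x 1)^2))
            + ((n + q) * N - n^2/2 * T) := by
          rw [integral_add Iab Ic,
            integral_add (I1.const_mul (1/2)) (I2.const_mul (-q)),
            integral_const_mul, integral_const_mul,
            integral_sub (Iρ.const_mul (n + q)) (integrable_const (n^2/2)),
            integral_const_mul, hmass, setIntegral_const, smul_eq_mul, measureReal_def, ← hTdef]
          ring
      _ = q*N + n*N/2 + ((1/2) * (∫ x in Ω, (v x 0 ^ 2 + v x 1 ^ 2 + v x 2 ^ 2 - n)^2)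
            + (-q) * (∫ x in Ω, (v x 1)^2)) := by
          have h2 : n^2 * T = n * N := by rw [← hnT]; ring
          linear_combination -h2 / 2
  -- the witness
  have hnm1 : 0 ≤ (n + m)/2 := by have := abs_le.mp hmn; linarith
  have hnm2 : 0 ≤ (n - m)/2 := by have := abs_le.mp hmn; linarith
  set a := Real.sqrt ((n + m)/2) with hadef
  set b := Real.sqrt ((n - m)/2) with hbdef
  have ha2 : a^2 = (n + m)/2 := Real.sq_sqrt hnm1
  have hb2 : b^2 = (n - m)/2 := Real.sq_sqrt hnm2
  set w : E3 → Fin 3 → ℝ := fun _ => ![a, 0, b] with hwdef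
  have hw0 : ∀ x : E3, w x 0 = a := by intro x; simp [hwdef]
  have hw1 : ∀ x : E3, w x 1 = 0 := by intro x; simp [hwdef]
  have hw2 : ∀ x : E3, w x 2 = b := by intro x; simp [hwdef]
  have hwρ : ∀ x : E3, w x 0 ^ 2 + w x 1 ^ 2 + w x 2 ^ 2 = n := by
    intro x; rw [hw0 x, hw1 x, hw2 x, ha2, hb2]; ring
  have hwσ : ∀ x : E3, w x 0 ^ 2 - w x 2 ^ 2 = m := by
    intro x; rw [hw0 x, hw2 x, ha2, hb2]; ring
  have hw : Admissible Ω N M w := by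
    refine ⟨memLp_const _, Filter.Eventually.of_forall fun x i => ?_, ?_, ?_⟩
    · fin_cases i
      · show (0:ℝ) ≤ w x 0
        rw [hw0 x]; exact Real.sqrt_nonneg _
      · show (0:ℝ) ≤ w x 1
        rw [hw1 x]
      · show (0:ℝ) ≤ w x 2
        rw [hw2 x]; exact Real.sqrt_nonneg _
    · rw [integral_congr_ae (g := fun _ => n)
        (Filter.Eventually.of_forall fun x => hwρ x),
        setIntegral_const, smul_eq_mul, mul_comm]
      exact hnT
    · rw [integral_congr_ae (g := fun _ => m)
        (Filter.Eventually.of_forall fun x => hwσ x),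
        setIntegral_const, smul_eq_mul, mul_comm]
      exact hmT
  have Ew : ∫ x in Ω, HTF 0 q (w x) = q*N + n*N/2 := by
    have h := (key w hw).2.2
    have e1 : ∫ x in Ω, (w x 0 ^ 2 + w x 1 ^ 2 + w x 2 ^ 2 - n)^2 = 0 := by
      have : ∀ x : E3, (w x 0 ^ 2 + w x 1 ^ 2 + w x 2 ^ 2 - n)^2 = 0 := by
        intro x; rw [hwρ x]; ring
      rw [integral_congr_ae (g := fun _ => (0:ℝ))
        (Filter.Eventually.of_forall fun x => this x), integral_zero]
    have e2 : ∫ x in Ω, (w x 1)^2 = 0 := by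
      have : ∀ x : E3, (w x 1)^2 = 0 := by intro x; rw [hw1 x]; ring
      rw [integral_congr_ae (g := fun _ => (0:ℝ))
        (Filter.Eventually.of_forall fun x => this x), integral_zero]
    rw [h, e1, e2]; ring
  obtain ⟨Iu1, Iu2, hEu⟩ := key u hu
  have hAnn : (0:ℝ) ≤ ∫ x in Ω, (u x 0 ^ 2 + u x 1 ^ 2 + u x 2 ^ 2 - n)^2 :=
    integral_nonneg fun x => sq_nonneg _
  have hBnn : (0:ℝ) ≤ ∫ x in Ω, (u x 1)^2 := integral_nonneg fun x => sq_nonneg _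
  constructor
  · rintro ⟨-, hmin⟩
    have hle := hmin w hw
    rw [Ew, hEu] at hle
    have hqB : 0 ≤ (-q) * ∫ x in Ω, (u x 1)^2 := mul_nonneg (by linarith) hBnn
    have hA : ∫ x in Ω, (u x 0 ^ 2 + u x 1 ^ 2 + u x 2 ^ 2 - n)^2 = 0 := by linarith
    have hB : ∫ x in Ω, (u x 1)^2 = 0 := by
      have h1 : (-q) * ∫ x in Ω, (u x 1)^2 = 0 := by linarith
      rcases mul_eq_zero.mp h1 with h | h
      · exact absurd h (by linarith)
      · exact h
    have hA' := (integral_eq_zero_iff_of_nonneg_ae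
      (Filter.Eventually.of_forall fun x => sq_nonneg _) Iu1).mp hA
    have hB' := (integral_eq_zero_iff_of_nonneg_ae
      (Filter.Eventually.of_forall fun x => sq_nonneg _) Iu2).mp hB
    filter_upwards [hA', hB'] with x hxA hxB
    have hu1 : u x 1 = 0 := by
      have h4 : (u x 1)^2 = 0 := hxB
      exact sq_eq_zero_iff.mp h4
    refine ⟨hu1, ?_⟩
    have h5 : (u x 0 ^ 2 + u x 1 ^ 2 + u x 2 ^ 2 - n)^2 = 0 := hxA
    have h3 : u x 0 ^ 2 + u x 1 ^ 2 + u x 2 ^ 2 - n = 0 := sq_eq_zero_iff.mp h5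
    have h6 : u x 1 ^ 2 = 0 := by rw [hu1]; ring
    linarith [h3, h6]
  · intro hae
    refine ⟨hu, fun v hv => ?_⟩
    obtain ⟨Iv1, Iv2, hEv⟩ := key v hv
    have e1 : ∫ x in Ω, (u x 0 ^ 2 + u x 1 ^ 2 + u x 2 ^ 2 - n)^2 = 0 := by
      rw [integral_congr_ae (g := fun _ => (0:ℝ)) ?_, integral_zero]
      filter_upwards [hae] with x hx
      obtain ⟨hx1, hx2⟩ := hx
      rw [hx1]
      nlinarith [hx2]
    have e2 : ∫ x in Ω, (u x 1)^2 = 0 := by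
      rw [integral_congr_ae (g := fun _ => (0:ℝ)) ?_, integral_zero]
      filter_upwards [hae] with x hx
      rw [hx.1]; ring
    rw [hEu, hEv, e1, e2]
    have hA : (0:ℝ) ≤ ∫ x in Ω, (v x 0 ^ 2 + v x 1 ^ 2 + v x 2 ^ 2 - n)^2 :=
      integral_nonneg fun x => sq_nonneg _
    have hB : (0:ℝ) ≤ ∫ x in Ω, (v x 1)^2 := integral_nonneg fun x => sq_nonneg _
    have hqB : 0 ≤ (-q) * ∫ x in Ω, (v x 1)^2 := mul_nonneg (by linarith) hB
    linarith
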